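/- Let A be a finite abelian group with a nondegenerate quadratic function q, and let (B,β) be a Schellekens pair for (A,q). Consider the maps j : B → B̂ × A, j(b) = (β(−,b)⁻¹, b), and π : B̂ × A → Γ̂, where Γ = Γ(B,β) and π(χ,a) is the character of Γ given by (u,v) ↦ σ(u,a)·χ(uv) (note that uv ∈ B for (u,v) ∈ Γ, so this is well defined). Then j is an injective group homomorphism, π is a surjective group homomorphism, and the image of j equals the kernel of π; that is, B → B̂ × A → Γ̂ is a short exact sequence. (Here Ĥ = Hom(H,ℂˣ) denotes the dual group of a finite abelian group H.) -/

import Mathlib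

/-- The bicharacter `σ(a,b) = q(ab) q(a)⁻¹ q(b)⁻¹` associated to `q`. -/
def qSigma {A : Type*} [CommGroup A] (q : A → ℂˣ) (a b : A) : ℂˣ :=
  q (a * b) * (q a)⁻¹ * (q b)⁻¹

/-- `q` is a quadratic function: `q(a⁻¹) = q(a)` and the associated `σ` is
multiplicative in each argument. -/
def IsQuadratic {A : Type*} [CommGroup A] (q : A → ℂˣ) : Prop :=
  (∀ a : A, q a⁻¹ = q a) ∧
  (∀ a b c : A, qSigma q (a * b) c = qSigma q a c * qSigma q b c) ∧
  (∀ a b c : A, qSigma q a (b * c) = qSigma q a b * qSigma q a c)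

/-- `q` is nondegenerate: for every `a ≠ 1` the homomorphism `σ(a,−)` is nontrivial. -/
def IsNondeg {A : Type*} [CommGroup A] (q : A → ℂˣ) : Prop :=
  ∀ a : A, a ≠ 1 → ∃ b : A, qSigma q a b ≠ 1

/-- `(B, β)` is a Schellekens pair for `(A, q)`: `β` is symmetric, multiplicative
in each argument, and `β(b,b) = q(b)` on the subgroup `B`. -/
def IsSchellekens {A : Type*} [CommGroup A] (q : A → ℂˣ) (B : Subgroup A)
    (β : B → B → ℂˣ) : Prop :=
  (∀ b c : B, β b c = β c b) ∧
  (∀ b c d : B, β (b * c) d = β b d * β c d) ∧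
  (∀ b c d : B, β b (c * d) = β b c * β b d) ∧
  (∀ b : B, β b b = q (b : A))

/-- `Γ(B,β) = {(a, a⁻¹ b) | a ∈ A, b ∈ B, σ(c,a) = β(c,b) ∀ c ∈ B}` as a subset of `A × A`. -/
def GammaSet {A : Type*} [CommGroup A] (q : A → ℂˣ) (B : Subgroup A)
    (β : B → B → ℂˣ) : Set (A × A) :=
  {z | ∃ b : B, z.2 = z.1⁻¹ * (b : A) ∧ ∀ c : B, qSigma q (c : A) z.1 = β c b}

/-- The bicharacter `τ((a,b),(c,d)) = σ(a,c) σ(b,d)⁻¹` on `A × A`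
associated to the quadratic function `q × q⁻¹`. -/
def qTau {A : Type*} [CommGroup A] (q : A → ℂˣ) (z w : A × A) : ℂˣ :=
  qSigma q z.1 w.1 * (qSigma q z.2 w.2)⁻¹


section GammaAux
open MonoidHom
/-- finiteness of the ℂˣ-dual. -/
lemma dual_finite (G : Type*) [CommGroup G] [Finite G] : Finite (G →* ℂˣ) := by
  obtain ⟨e⟩ := CommGroup.monoidHom_mulEquiv_of_hasEnoughRootsOfUnity G ℂ
  exact Finite.of_equiv G e.symm.toEquiv

/-- cardinality of the ℂˣ-dual of a finite abelian group. -/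
lemma card_dual (G : Type*) [CommGroup G] [Finite G] :
    Nat.card (G →* ℂˣ) = Nat.card G := by
  obtain ⟨e⟩ := CommGroup.monoidHom_mulEquiv_of_hasEnoughRootsOfUnity G ℂ
  exact Nat.card_congr e.toEquiv

/-- restriction of characters to a subgroup, as a homomorphism. -/
def resHom {G : Type*} [CommGroup G] (H : Subgroup G) : (G →* ℂˣ) →* (H →* ℂˣ) where
  toFun φ := φ.comp H.subtype
  map_one' := rfl
  map_mul' _ _ := rfl

@[simp] lemma resHom_apply {G : Type*} [CommGroup G] (H : Subgroup G) (φ : G →* ℂˣ) (h : H) :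
    resHom H φ h = φ (h : G) := rfl

lemma card_ker_resHom {G : Type*} [CommGroup G] [Finite G] (H : Subgroup G) :
    Nat.card (resHom (G := G) H).ker = Nat.card (G ⧸ H) := by
  have e : ((G ⧸ H) →* ℂˣ) ≃ (resHom (G := G) H).ker := by
    refine Equiv.ofBijective (fun ψ => ⟨ψ.comp (QuotientGroup.mk' H), ?_⟩) ⟨?_, ?_⟩
    · ext h
      simp only [mem_ker, resHom_apply, MonoidHom.comp_apply, QuotientGroup.mk'_apply]
      rw [show ((h : G) : G ⧸ H) = 1 from (QuotientGroup.eq_one_iff _).mpr h.2, map_one]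
      rfl
    · intro ψ ψ' hh
      have h2 : ψ.comp (QuotientGroup.mk' H) = ψ'.comp (QuotientGroup.mk' H) :=
        congrArg Subtype.val hh
      ext x
      exact congrArg Units.val (DFunLike.congr_fun h2 x)
    · rintro ⟨φ, hφ⟩
      have hφ' : ∀ g ∈ H, φ g = 1 := by
        intro g hg
        have := DFunLike.congr_fun (mem_ker.mp hφ) (⟨g, hg⟩ : H)
        simpa using this
      refine ⟨QuotientGroup.lift H φ hφ', ?_⟩
      apply Subtype.ext
      ext g
      rfl
  rw [← Nat.card_congr e, card_dual]

lemma resHom_surjective {G : Type*} [CommGroup G] [Finite G] (H : Subgroup G) :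
    Function.Surjective (resHom (G := G) H) := by
  haveI := dual_finite G
  haveI := dual_finite H
  rw [← MonoidHom.range_eq_top]
  apply Subgroup.eq_top_of_card_eq
  have h1 : Nat.card (G →* ℂˣ) =
      Nat.card ((G →* ℂˣ) ⧸ (resHom (G := G) H).ker) * Nat.card (resHom (G := G) H).ker :=
    Subgroup.card_eq_card_quotient_mul_card_subgroup _
  have h2 : Nat.card ((G →* ℂˣ) ⧸ (resHom (G := G) H).ker) = Nat.card (resHom (G := G) H).range :=
    Nat.card_congr (QuotientGroup.quotientKerEquivRange _).toEquiv
  have h3 : Nat.card G = Nat.card (G ⧸ H) * Nat.card H :=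
    Subgroup.card_eq_card_quotient_mul_card_subgroup H
  rw [h2, card_ker_resHom, card_dual] at h1
  rw [card_dual]
  have hpos : 0 < Nat.card (G ⧸ H) := Nat.card_pos
  apply Nat.eq_of_mul_eq_mul_left hpos
  rw [mul_comm (Nat.card (G ⧸ H)) _, ← h1, h3, mul_comm]


section GammaAux2
open MonoidHom
variable {A : Type*} [CommGroup A]

/-- `σ` as a group homomorphism in each variable. -/
def sigHom (q : A → ℂˣ) (hq : IsQuadratic q) : A →* A →* ℂˣ :=
  MonoidHom.mk' (fun a => MonoidHom.mk' (fun b => qSigma q a b) (fun b c => hq.2.2 a b c))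
    (fun a b => MonoidHom.ext fun c => hq.2.1 a b c)

@[simp] lemma sigHom_apply (q : A → ℂˣ) (hq : IsQuadratic q) (a b : A) :
    sigHom q hq a b = qSigma q a b := rfl

/-- `β` as a group homomorphism in each variable. -/
def betaHomAux (q : A → ℂˣ) (B : Subgroup A) (β : B → B → ℂˣ) (hβ : IsSchellekens q B β) :
    B →* B →* ℂˣ :=
  MonoidHom.mk' (fun b => MonoidHom.mk' (fun c => β b c) (fun c d => hβ.2.2.1 b c d))
    (fun b c => MonoidHom.ext fun d => hβ.2.1 b c d)

@[simp] lemma betaHomAux_apply (q : A → ℂˣ) (B : Subgroup A) (β : B → B → ℂˣ)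
    (hβ : IsSchellekens q B β) (b c : B) : betaHomAux q B β hβ b c = β b c := rfl

lemma qSigma_comm (q : A → ℂˣ) (a b : A) : qSigma q a b = qSigma q b a := by
  unfold qSigma; rw [mul_comm a b, mul_right_comm]

end GammaAux2


lemma surj_of_ker_range {G H K : Type*} [CommGroup G] [CommGroup H] [CommGroup K]
    [Finite G] [Finite H] [Finite K]
    (jm : K →* G) (f : G →* H) (hinj : Function.Injective jm)
    (hker : ∀ x : G, f x = 1 ↔ x ∈ Set.range jm)
    (hcard : Nat.card G = Nat.card K * Nat.card H) : Function.Surjective f := by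
  have hkf : (f.ker : Set G) = Set.range jm := by
    ext x
    rw [SetLike.mem_coe, MonoidHom.mem_ker, hker x]
  have e1 : Nat.card f.ker = Nat.card (Set.range jm) := Nat.card_congr (Equiv.setCongr hkf)
  have e2 : Nat.card (Set.range jm) = Nat.card K :=
    Nat.card_congr (Equiv.ofInjective jm hinj).symm
  have h1 : Nat.card G = Nat.card (G ⧸ f.ker) * Nat.card f.ker :=
    Subgroup.card_eq_card_quotient_mul_card_subgroup _
  have h2 : Nat.card (G ⧸ f.ker) = Nat.card f.range :=
    Nat.card_congr (QuotientGroup.quotientKerEquivRange f).toEquiv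
  rw [h2, e1, e2, hcard] at h1
  rw [← MonoidHom.range_eq_top]
  apply Subgroup.eq_top_of_card_eq
  have hpos : 0 < Nat.card K := Nat.card_pos
  rw [mul_comm] at h1
  exact (Nat.eq_of_mul_eq_mul_right hpos h1).symm

set_option maxHeartbeats 2000000 in
/-- the short exact sequence `B → B̂ × A → Γ̂`, where the first map is
`b ↦ (β(−,b)⁻¹, b)` and the second sends `(χ, a)` to the character
`(u,v) ↦ σ(u,a)·χ(uv)` of `Γ = Γ(B,β)`. -/
theorem gamma_dual_ses {A : Type*} [CommGroup A] [Fintype A]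
    (q : A → ℂˣ) (hq : IsQuadratic q) (hnd : IsNondeg q)
    (B : Subgroup A) (β : B → B → ℂˣ) (hβ : IsSchellekens q B β)
    (Γ : Subgroup (A × A)) (hΓ : (Γ : Set (A × A)) = GammaSet q B β) :
    ∃ (j : B →* (B →* ℂˣ) × A) (π : ((B →* ℂˣ) × A) →* (Γ →* ℂˣ)),
      (∀ b c : B, (j b).1 c = (β c b)⁻¹) ∧
      (∀ b : B, (j b).2 = (b : A)) ∧
      (∀ (χ : B →* ℂˣ) (a : A) (z : Γ) (h : (z : A × A).1 * (z : A × A).2 ∈ B),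
        π (χ, a) z = qSigma q (z : A × A).1 a * χ ⟨(z : A × A).1 * (z : A × A).2, h⟩) ∧
      Function.Injective j ∧ Function.Surjective π ∧ j.range = MonoidHom.ker (G := (B →* ℂˣ) × A) π := by
  classical
  haveI : Finite A := inferInstance
  haveI hdB := dual_finite B
  haveI hdA := dual_finite A
  haveI hdΓ := dual_finite Γ
  set σh := sigHom q hq with hσh
  set bH := betaHomAux q B β hβ with hbH
  have hsym : ∀ b c : B, β b c = β c b := hβ.1
  have hσsym : ∀ a b : A, qSigma q a b = qSigma q b a := qSigma_comm q
  have hΓmem : ∀ z : A × A, z ∈ Γ ↔ z ∈ GammaSet q B β := fun z => by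
    rw [← SetLike.mem_coe, hΓ]
  have hmemB : ∀ z : Γ, ((z : A × A).1 * (z : A × A).2) ∈ B := by
    intro z
    obtain ⟨b, h1, -⟩ := (hΓmem _).mp z.2
    rw [h1, mul_inv_cancel_left]
    exact b.2
  set g : Γ →* B := MonoidHom.mk' (fun z => ⟨(z : A × A).1 * (z : A × A).2, hmemB z⟩)
    (fun z w => Subtype.ext (mul_mul_mul_comm _ _ _ _)) with hg
  have hkey : ∀ (z : Γ) (c : B), qSigma q (c : A) (z : A × A).1 = β c (g z) := by
    intro z c
    obtain ⟨b, h1, h2⟩ := (hΓmem _).mp z.2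
    have hgz : g z = b := Subtype.ext (by
      show (z : A × A).1 * (z : A × A).2 = (b : A)
      rw [h1, mul_inv_cancel_left])
    rw [hgz]; exact h2 c
  set j : B →* (B →* ℂˣ) × A := MonoidHom.prod ((invMonoidHom (α := B →* ℂˣ)).comp bH) B.subtype with hj
  set π : ((B →* ℂˣ) × A) →* (Γ →* ℂˣ) := MonoidHom.mk'
    (fun p => ((σh.flip p.2).comp ((MonoidHom.fst A A).comp Γ.subtype)) * p.1.comp g)
    (fun p p' => by
      refine MonoidHom.ext fun z => ?_
      show sigHom q hq (z : A × A).1 (p.2 * p'.2) * (p.1 (g z) * p'.1 (g z))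
          = (sigHom q hq (z : A × A).1 p.2 * p.1 (g z))
            * (sigHom q hq (z : A × A).1 p'.2 * p'.1 (g z))
      rw [map_mul]
      exact mul_mul_mul_comm _ _ _ _) with hπ
  have hπapp : ∀ (p : (B →* ℂˣ) × A) (z : Γ),
      π p z = qSigma q (z : A × A).1 p.2 * p.1 (g z) := fun p z => rfl
  have hjinj : Function.Injective j := by
    intro b b' hbb
    exact Subtype.ext (congrArg Prod.snd hbb)
  -- surjectivity of σh and ψm
  have hσinj : Function.Injective σh := by
    apply (injective_iff_map_eq_one σh).mpr
    intro a ha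
    by_contra hne
    obtain ⟨b, hb⟩ := hnd a hne
    exact hb (DFunLike.congr_fun ha b)
  have hσsurj : Function.Surjective σh := by
    rw [← MonoidHom.range_eq_top]
    apply Subgroup.eq_top_of_card_eq
    rw [← Nat.card_congr (MonoidHom.ofInjective hσinj).toEquiv, card_dual]
  set ψm : A →* (B →* ℂˣ) := (resHom B).comp σh with hψm
  have hψsurj : Function.Surjective ψm := (resHom_surjective B).comp hσsurj
  -- cardinality of Γ
  set F : (A × B) →* (B →* ℂˣ) :=
    (ψm.comp (MonoidHom.fst A B)) * (bH.comp (MonoidHom.snd A B))⁻¹ with hF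
  have hFapp : ∀ p : A × B, F p = ψm p.1 * (bH p.2)⁻¹ := fun p => rfl
  have hFsurj : Function.Surjective F := by
    intro χ
    obtain ⟨a₁, ha₁⟩ := hψsurj χ
    refine ⟨(a₁, 1), ?_⟩
    refine MonoidHom.ext fun c => ?_
    show ψm a₁ c * ((bH 1) c)⁻¹ = χ c
    have h5 : bH (1 : B) c = 1 := DFunLike.congr_fun (map_one bH) c
    rw [DFunLike.congr_fun ha₁ c, h5, inv_one, mul_one]
  have hkerF : ∀ p : A × B, p ∈ F.ker ↔ ∀ c : B, ψm p.1 c = bH p.2 c := by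
    intro p
    rw [MonoidHom.mem_ker]
    constructor
    · intro h c
      have h6 : ψm p.1 c * ((bH p.2) c)⁻¹ = 1 := DFunLike.congr_fun h c
      exact mul_inv_eq_one.mp h6
    · intro h
      refine MonoidHom.ext fun c => ?_
      show ψm p.1 c * ((bH p.2) c)⁻¹ = 1
      rw [h c]
      exact mul_inv_cancel _
  have eΓmem : ∀ p : F.ker,
      (((p : A × B).1, (p : A × B).1⁻¹ * (((p : A × B).2 : B) : A)) : A × A) ∈ Γ := by
    intro p
    rw [hΓmem]
    refine ⟨(p : A × B).2, rfl, fun c => ?_⟩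
    have h := (hkerF _).mp p.2 c
    rw [hσsym, hsym c _]
    exact h
  have eΓ : F.ker ≃ Γ := by
    refine Equiv.ofBijective
      (fun p => ⟨((p : A × B).1, (p : A × B).1⁻¹ * (((p : A × B).2 : B) : A)), eΓmem p⟩)
      ⟨?_, ?_⟩
    · intro p p' hpp
      have h1 : (p : A × B).1 = (p' : A × B).1 :=
        congrArg (fun z : Γ => (z : A × A).1) hpp
      have h2 : (p : A × B).1⁻¹ * (((p : A × B).2 : B) : A)
          = (p' : A × B).1⁻¹ * (((p' : A × B).2 : B) : A) :=
        congrArg (fun z : Γ => (z : A × A).2) hpp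
      rw [h1] at h2
      have h3 : ((p : A × B).2 : B) = ((p' : A × B).2 : B) :=
        Subtype.ext (mul_left_cancel h2)
      exact Subtype.ext (Prod.ext h1 h3)
    · intro z
      obtain ⟨b, h1, h2⟩ := (hΓmem _).mp z.2
      have hker : ((z : A × A).1, b) ∈ F.ker := by
        rw [hkerF]
        intro c
        have h3 := h2 c
        rw [hσsym, hsym c b] at h3
        exact h3
      refine ⟨⟨((z : A × A).1, b), hker⟩, ?_⟩
      exact Subtype.ext (Prod.ext rfl h1.symm)
  have hcardΓ : Nat.card Γ = Nat.card A := by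
    rw [← Nat.card_congr eΓ]
    have h1 : Nat.card (A × B) = Nat.card ((A × B) ⧸ F.ker) * Nat.card F.ker :=
      Subgroup.card_eq_card_quotient_mul_card_subgroup _
    have h2 : Nat.card ((A × B) ⧸ F.ker) = Nat.card B := by
      rw [Nat.card_congr (QuotientGroup.quotientKerEquivRange F).toEquiv,
        MonoidHom.range_eq_top.mpr hFsurj, Subgroup.card_top, card_dual]
    rw [h2, Nat.card_prod] at h1
    have hpos : 0 < Nat.card B := Nat.card_pos
    apply Nat.eq_of_mul_eq_mul_left hpos
    rw [← h1, mul_comm]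
  -- exactness
  have hjk : ∀ b : B, π (j b) = 1 := by
    intro b
    refine MonoidHom.ext fun z => ?_
    rw [hπapp]
    show qSigma q (z : A × A).1 (b : A) * ((bH b) (g z))⁻¹ = 1
    rw [hσsym, hkey z b]
    exact mul_inv_cancel _
  have hkj : ∀ p : (B →* ℂˣ) × A, π p = 1 → ∃ b : B, j b = p := by
    rintro ⟨χ, a⟩ hp
    have hp' : ∀ z : Γ, qSigma q (z : A × A).1 a * χ (g z) = 1 := by
      intro z
      have h0 := DFunLike.congr_fun hp z
      rw [hπapp, MonoidHom.one_apply] at h0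
      exact h0
    have hstep : ∀ (a₁ : A) (b₁ : B), (∀ c : B, ψm a₁ c = bH b₁ c) →
        qSigma q a₁ a * χ b₁ = 1 := by
      intro a₁ b₁ hcond
      have hzmem : ((a₁, a₁⁻¹ * (b₁ : A)) : A × A) ∈ Γ := by
        rw [hΓmem]
        refine ⟨b₁, rfl, fun c => ?_⟩
        have h := hcond c
        rw [hσsym, hsym c b₁]
        exact h
      have h1 := hp' ⟨_, hzmem⟩
      have hgz : g (⟨_, hzmem⟩ : Γ) = b₁ := Subtype.ext (mul_inv_cancel_left a₁ (b₁ : A))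
      rw [hgz] at h1
      exact h1
    set m : A →* (ψm.ker →* ℂˣ) := (resHom ψm.ker).comp σh with hm
    have hmsurj : Function.Surjective m := (resHom_surjective ψm.ker).comp hσsurj
    have hBle : B ≤ m.ker := by
      intro x hx
      rw [MonoidHom.mem_ker]
      refine MonoidHom.ext fun k => ?_
      have hk : ψm (k : A) = 1 := MonoidHom.mem_ker.mp k.2
      have h4 := DFunLike.congr_fun hk (⟨x, hx⟩ : B)
      show qSigma q x (k : A) = 1
      rw [hσsym]
      exact h4
    have hcard1 : Nat.card A = Nat.card ψm.ker * Nat.card m.ker := by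
      have h1 : Nat.card A = Nat.card (A ⧸ m.ker) * Nat.card m.ker :=
        Subgroup.card_eq_card_quotient_mul_card_subgroup _
      have h2 : Nat.card (A ⧸ m.ker) = Nat.card ψm.ker := by
        rw [Nat.card_congr (QuotientGroup.quotientKerEquivRange m).toEquiv,
          MonoidHom.range_eq_top.mpr hmsurj, Subgroup.card_top, card_dual]
      rw [h2] at h1
      exact h1
    have hcard2 : Nat.card A = Nat.card ψm.ker * Nat.card B := by
      have h1 : Nat.card A = Nat.card (A ⧸ ψm.ker) * Nat.card ψm.ker :=
        Subgroup.card_eq_card_quotient_mul_card_subgroup _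
      have h2 : Nat.card (A ⧸ ψm.ker) = Nat.card B := by
        rw [Nat.card_congr (QuotientGroup.quotientKerEquivRange ψm).toEquiv,
          MonoidHom.range_eq_top.mpr hψsurj, Subgroup.card_top, card_dual]
      rw [h2, mul_comm] at h1
      exact h1
    have hBeq : B = m.ker := by
      apply Subgroup.eq_of_le_of_card_ge hBle
      have h5 := hcard1.symm.trans hcard2
      have hpos : 0 < Nat.card ψm.ker := Nat.card_pos
      exact le_of_eq (Nat.eq_of_mul_eq_mul_left hpos h5)
    have haB : a ∈ B := by
      rw [hBeq, MonoidHom.mem_ker]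
      refine MonoidHom.ext fun k => ?_
      show qSigma q a (k : A) = 1
      have hcond : ∀ c : B, ψm (k : A) c = bH 1 c := by
        intro c
        have h5 : bH (1 : B) c = 1 := DFunLike.congr_fun (map_one bH) c
        have h6 : ψm (k : A) c = 1 := DFunLike.congr_fun (MonoidHom.mem_ker.mp k.2) c
        rw [h5, h6]
      have h1 := hstep (k : A) 1 hcond
      rw [map_one, mul_one] at h1
      rw [hσsym]
      exact h1
    refine ⟨⟨a, haB⟩, ?_⟩
    have hfst : (j ⟨a, haB⟩).1 = χ := by
      refine MonoidHom.ext fun c => ?_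
      obtain ⟨a₁, ha₁⟩ := hψsurj (bH c)
      have h1 := hstep a₁ c (fun d => DFunLike.congr_fun ha₁ d)
      have h2 : qSigma q a₁ a = β c ⟨a, haB⟩ := DFunLike.congr_fun ha₁ (⟨a, haB⟩ : B)
      rw [h2] at h1
      show (β ⟨a, haB⟩ c)⁻¹ = χ c
      rw [hsym]
      exact inv_eq_of_mul_eq_one_right h1
    exact Prod.ext hfst rfl
  refine ⟨j, π, ?_, fun b => rfl, fun χ a z h => rfl, hjinj, ?_, ?_⟩
  · intro b c
    rw [hsym c b]
    rfl
  · refine surj_of_ker_range (G := (B →* ℂˣ) × A) (H := Γ →* ℂˣ) (K := B) j π hjinj (fun p => ?_) ?_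
    · constructor
      · intro h
        obtain ⟨b, hb⟩ := hkj p h
        exact ⟨b, hb⟩
      · rintro ⟨b, rfl⟩
        exact hjk b
    · rw [Nat.card_prod, card_dual, card_dual, hcardΓ]
  · refine SetLike.ext fun p => ?_
    rw [MonoidHom.mem_ker, MonoidHom.mem_range]
    constructor
    · rintro ⟨b, rfl⟩
      exact hjk b
    · intro h
      obtain ⟨b, hb⟩ := hkj p h
      exact ⟨b, hb⟩
end GammaAux
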